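/- Let A be a sectorial operator on a Hilbert space H with ‖(A+λ)⁻¹‖ ≤ M/|λ| for all λ in the sector S_φ, φ > 0, and let w ∈ ℂ lie in the sector S_{φ₁} with φ₁ + φ₂ ≤ φ and φ₂ < π − φ₁. Then for every μ ∈ S_{φ₂} with μ ≠ 0, the operator A + w + μ is invertible and ‖(A + w + μ)⁻¹‖ ≤ M·C⁻¹ (|μ| + |w|)⁻¹, where C is the constant from the sector-sum inequality |μ + w| ≥ C(|μ| + |w|). -/

import Mathlib

/-- Characterization of the sector `|arg z| ≤ θ` via `|z| cos θ ≤ Re z`. -/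
lemma abs_arg_le_of_abs_mul_cos_le {z : ℂ} (hz : z ≠ 0) {θ : ℝ} (hθ0 : 0 ≤ θ)
    (hθπ : θ ≤ Real.pi) (h : ‖z‖ * Real.cos θ ≤ z.re) : |z.arg| ≤ θ := by
  by_contra hcon
  push_neg at hcon
  have h1 : Real.cos |z.arg| < Real.cos θ :=
    Real.strictAntiOn_cos ⟨hθ0, hθπ⟩ ⟨abs_nonneg _, Complex.abs_arg_le_pi z⟩ hcon
  have h2 : Real.cos |z.arg| = Real.cos z.arg := by
    rcases abs_choice z.arg with h | h <;> rw [h] <;> simp [Real.cos_neg]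
  have h3 : ‖z‖ * Real.cos z.arg = z.re := Complex.norm_mul_cos_arg z
  have h4 : 0 < ‖z‖ := (norm_pos_iff.mpr hz)
  nlinarith

/-- The argument of `exp (γ * I)` for `γ ∈ (-π, π]`. -/
lemma arg_exp_real_mul_I {γ : ℝ} (h1 : -Real.pi < γ) (h2 : γ ≤ Real.pi) :
    (Complex.exp ((γ:ℂ) * Complex.I)).arg = γ := by
  rw [Complex.exp_mul_I]
  push_cast
  exact Complex.arg_cos_add_sin_mul_I ⟨h1, h2⟩

/-- A cosine lower bound for points in a sector. -/
lemma cos_le_cos_of_abs_le {a b : ℝ} (hab : |a| ≤ b) (hb : b ≤ Real.pi) :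
    Real.cos b ≤ Real.cos a := by
  have h2 : Real.cos |a| = Real.cos a := by
    rcases abs_choice a with h | h <;> rw [h] <;> simp [Real.cos_neg]
  rw [← h2]
  exact Real.cos_le_cos_of_nonneg_of_le_pi (abs_nonneg a) hb hab

set_option maxHeartbeats 1000000 in
/-- Sum of two points of sectors stays in the enclosing sector. -/
lemma abs_arg_add_le {μ w : ℂ} {φ : ℝ} (hφ : φ < Real.pi)
    (hμ : μ ≠ 0) (hw : w ≠ 0) (hz : μ + w ≠ 0)
    (hsum : |μ.arg| + |w.arg| ≤ φ) : |(μ + w).arg| ≤ φ := by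
  set α := μ.arg with hα
  set β := w.arg with hβ
  set γ : ℝ := (α + β) / 2 with hγ
  have hπ : (0:ℝ) < Real.pi := Real.pi_pos
  have hφ0 : 0 ≤ φ := le_trans (by positivity) hsum
  have hadd : |α + β| ≤ φ := le_trans (abs_add_le α β) hsum
  have hsub : |α - β| ≤ φ := le_trans (abs_sub α β) hsum
  have hγle : |γ| ≤ φ / 2 := by
    rw [hγ, abs_div, abs_two]; linarith
  have hμd : |α - γ| ≤ φ / 2 := by
    rw [show α - γ = (α - β) / 2 by rw [hγ]; ring, abs_div, abs_two]; linarith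
  have hwd : |β - γ| ≤ φ / 2 := by
    rw [show β - γ = -(α - β) / 2 by rw [hγ]; ring, abs_div, abs_two, abs_neg]; linarith
  have hγb := abs_le.mp hγle
  have hμb := abs_le.mp hμd
  have hwb := abs_le.mp hwd
  set u : ℂ := Complex.exp (((-γ : ℝ) : ℂ) * Complex.I) with hu
  have hune : u ≠ 0 := Complex.exp_ne_zero _
  have huabs : ‖u‖ = 1 := Complex.norm_exp_ofReal_mul_I _
  have huarg : u.arg = -γ := arg_exp_real_mul_I (by linarith) (by linarith)
  -- arguments of the rotated summands
  have hargμu : (μ * u).arg = α - γ := by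
    rw [Complex.arg_mul hμ hune (by rw [huarg]; exact ⟨by simp only [← hα]; linarith,
      by simp only [← hα]; linarith⟩), huarg, ← hα]; ring
  have hargwu : (w * u).arg = β - γ := by
    rw [Complex.arg_mul hw hune (by rw [huarg]; exact ⟨by simp only [← hβ]; linarith,
      by simp only [← hβ]; linarith⟩), huarg, ← hβ]; ring
  -- real-part lower bounds for the rotated summands
  have hreμ : ‖μ‖ * Real.cos (φ / 2) ≤ (μ * u).re := by
    have h1 := Complex.norm_mul_cos_arg (μ * u)
    rw [hargμu, norm_mul, huabs, mul_one] at h1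
    have h2 : Real.cos (φ / 2) ≤ Real.cos (α - γ) := cos_le_cos_of_abs_le hμd (by linarith)
    nlinarith [norm_nonneg μ]
  have hrew : ‖w‖ * Real.cos (φ / 2) ≤ (w * u).re := by
    have h1 := Complex.norm_mul_cos_arg (w * u)
    rw [hargwu, norm_mul, huabs, mul_one] at h1
    have h2 : Real.cos (φ / 2) ≤ Real.cos (β - γ) := cos_le_cos_of_abs_le hwd (by linarith)
    nlinarith [norm_nonneg w]
  -- the rotated sum lies in the right half sector
  have hzu : (μ + w) * u ≠ 0 := mul_ne_zero hz hune
  have hre : ‖(μ + w) * u‖ * Real.cos (φ / 2) ≤ ((μ + w) * u).re := by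
    have h5 : ((μ + w) * u).re = (μ * u).re + (w * u).re := by
      rw [add_mul, Complex.add_re]
    have habs : ‖μ + w‖ ≤ ‖μ‖ + ‖w‖ :=
      norm_add_le _ _
    have hcos : 0 ≤ Real.cos (φ / 2) :=
      Real.cos_nonneg_of_mem_Icc ⟨by linarith, by linarith⟩
    rw [norm_mul, huabs, mul_one]
    nlinarith
  have harg1 : |((μ + w) * u).arg| ≤ φ / 2 :=
    abs_arg_le_of_abs_mul_cos_le hzu (by linarith) (by linarith) hre
  have harg1' := abs_le.mp harg1
  -- undo the rotation
  have hrot : (μ + w) = ((μ + w) * u) * Complex.exp (((γ : ℝ) : ℂ) * Complex.I) := by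
    rw [mul_assoc, hu, ← Complex.exp_add]
    have : ((-γ : ℝ) : ℂ) * Complex.I + ((γ : ℝ) : ℂ) * Complex.I = 0 := by
      push_cast; ring
    rw [this, Complex.exp_zero, mul_one]
  have hargexp : (Complex.exp (((γ : ℝ) : ℂ) * Complex.I)).arg = γ :=
    arg_exp_real_mul_I (by linarith) (by linarith)
  have hfinal : (μ + w).arg = ((μ + w) * u).arg + γ := by
    conv_lhs => rw [hrot]
    rw [Complex.arg_mul hzu (Complex.exp_ne_zero _)
      (by rw [hargexp]; exact ⟨by linarith, by linarith⟩), hargexp]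
  rw [hfinal, abs_le]
  exact ⟨by linarith, by linarith⟩

/-- If `A` is sectorial in the sector `S_φ` with resolvent bound `‖(A+λ)⁻¹‖ ≤ M/|λ|`,
`w ∈ S_{φ₁}` and `μ ∈ S_{φ₂}` with `φ₁ + φ₂ ≤ φ`, `φ₂ < π - φ₁`, and `C > 0` is the
sector-sum constant, then `A + w + μ` is invertible with
`‖(A + w + μ)⁻¹‖ ≤ M C⁻¹ (|μ| + |w|)⁻¹`. -/
theorem shifted_resolvent_bound
    {H : Type*} [NormedAddCommGroup H] [InnerProductSpace ℂ H] [CompleteSpace H]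
    (A : H →ₗ[ℂ] H) (M φ φ₁ φ₂ C : ℝ) (hM : 0 < M) (hC : 0 < C)
    (hφ₁ : 0 ≤ φ₁) (hφ₂ : 0 ≤ φ₂) (hφφ : φ₁ + φ₂ ≤ φ) (hφ : φ < Real.pi)
    (hφ₂' : φ₂ < Real.pi - φ₁)
    (hsector : ∀ μ ν : ℂ, |μ.arg| ≤ φ₂ → |ν.arg| ≤ φ₁ →
      C * (‖μ‖ + ‖ν‖) ≤ ‖μ + ν‖)
    (hres : ∀ l : ℂ, l ≠ 0 → |l.arg| ≤ φ → ∃ R : H →L[ℂ] H,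
      (∀ x : H, A (R x) + l • R x = x) ∧ (∀ u : H, R (A u + l • u) = u) ∧
      ‖R‖ ≤ M * (‖l‖)⁻¹)
    (w : ℂ) (hw : w = 0 ∨ |w.arg| ≤ φ₁) :
    ∀ μ : ℂ, μ ≠ 0 → |μ.arg| ≤ φ₂ → ∃ R : H →L[ℂ] H,
      (∀ x : H, A (R x) + (w + μ) • R x = x) ∧
      (∀ u : H, R (A u + (w + μ) • u) = u) ∧
      ‖R‖ ≤ M * C⁻¹ * (‖μ‖ + ‖w‖)⁻¹ := by
  intro μ hμ0 hμa
  have hwarg : |w.arg| ≤ φ₁ := by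
    rcases hw with h | h
    · simpa [h, Complex.arg_zero] using hφ₁
    · exact h
  have hsec : C * (‖μ‖ + ‖w‖) ≤ ‖μ + w‖ :=
    hsector μ w hμa hwarg
  have hμpos : 0 < ‖μ‖ := norm_pos_iff.mpr hμ0
  have hwnn : 0 ≤ ‖w‖ := norm_nonneg w
  have hspos : 0 < C * (‖μ‖ + ‖w‖) := by positivity
  have hzpos : 0 < ‖μ + w‖ := lt_of_lt_of_le hspos hsec
  have hz : μ + w ≠ 0 := by
    intro h; rw [h] at hzpos; simp at hzpos
  have hl : w + μ ≠ 0 := by rwa [add_comm]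
  have hargl : |(w + μ).arg| ≤ φ := by
    by_cases hw0 : w = 0
    · subst hw0
      simpa using le_trans hμa (by linarith)
    · rw [add_comm]
      exact abs_arg_add_le hφ hμ0 hw0 hz (by linarith)
  obtain ⟨R, h1, h2, h3⟩ := hres (w + μ) hl hargl
  refine ⟨R, h1, h2, le_trans h3 ?_⟩
  have hinv : (‖w + μ‖)⁻¹ ≤ (C * (‖μ‖ + ‖w‖))⁻¹ := by
    apply inv_anti₀ hspos
    calc C * (‖μ‖ + ‖w‖)
        ≤ ‖μ + w‖ := hsec
      _ = ‖w + μ‖ := by rw [add_comm]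
  calc M * (‖w + μ‖)⁻¹
      ≤ M * (C * (‖μ‖ + ‖w‖))⁻¹ :=
        mul_le_mul_of_nonneg_left hinv hM.le
    _ = M * C⁻¹ * (‖μ‖ + ‖w‖)⁻¹ := by
        rw [mul_inv, mul_assoc]
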